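/- If T is a bounded operator on a Hilbert space such that (T, 0) is annihilated by a Γ-distinguished polynomial f, then f(z₁,z₂) is not divisible by z₂, and writing f(z₁,0) = p(z₁), p is a non-constant single-variable polynomial with p(T) = 0; hence σ(T) is a finite set contained in Z(p). If moreover the numerical radius ω(T) ≤ 1, then σ(T) ⊆ 𝔻 (the open unit disc). -/

import Mathlib

noncomputable section

def G2 : Set (ℂ × ℂ) :=
  {w | ∃ z₁ z₂ : ℂ, ‖z₁‖ < 1 ∧ ‖z₂‖ < 1 ∧ w = (z₁ + z₂, z₁ * z₂)}

def GammaSet : Set (ℂ × ℂ) :=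
  {w | ∃ z₁ z₂ : ℂ, ‖z₁‖ ≤ 1 ∧ ‖z₂‖ ≤ 1 ∧ w = (z₁ + z₂, z₁ * z₂)}

def bGamma : Set (ℂ × ℂ) :=
  {w | ∃ z₁ z₂ : ℂ, ‖z₁‖ = 1 ∧ ‖z₂‖ = 1 ∧ w = (z₁ + z₂, z₁ * z₂)}

def Zset (p : MvPolynomial (Fin 2) ℂ) : Set (ℂ × ℂ) :=
  {w | MvPolynomial.eval ![w.1, w.2] p = 0}

def GammaDistinguished (p : MvPolynomial (Fin 2) ℂ) : Prop :=
  (Zset p ∩ G2).Nonempty ∧ Zset p ∩ (GammaSet \ G2) ⊆ bGamma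

def opEval2 {A : Type*} [Ring A] [Algebra ℂ A] (p : MvPolynomial (Fin 2) ℂ) (S P : A) : A :=
  p.support.sum fun m => (MvPolynomial.coeff m p) • (S ^ (m 0) * P ^ (m 1))

/-- Numerical radius of a bounded operator on a Hilbert space. -/
def numRadiusOp {H : Type*} [NormedAddCommGroup H] [InnerProductSpace ℂ H]
    (T : H →L[ℂ] H) : ℝ :=
  sSup {s : ℝ | ∃ x : H, ‖x‖ = 1 ∧ s = ‖(inner ℂ x (T x) : ℂ)‖}

lemma aux_eval (f : MvPolynomial (Fin 2) ℂ) (z : ℂ) :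
    Polynomial.eval z (MvPolynomial.aeval (fun i : Fin 2 => if i = 0 then Polynomial.X else 0) f)
      = MvPolynomial.eval ![z, 0] f := by
  have h := MvPolynomial.comp_aeval (R := ℂ)
    (f := fun i : Fin 2 => if i = 0 then Polynomial.X else (0 : Polynomial ℂ))
    (Polynomial.aeval z)
  have h2 : Polynomial.eval z (MvPolynomial.aeval
      (fun i : Fin 2 => if i = 0 then Polynomial.X else 0) f)
      = MvPolynomial.aeval (fun i : Fin 2 =>
          Polynomial.aeval z ((if i = 0 then Polynomial.X else 0 : Polynomial ℂ))) f := by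
    rw [← h]; simp [Polynomial.aeval_def, Polynomial.eval₂_eq_eval_map]
  rw [h2]
  have : (fun i : Fin 2 => Polynomial.aeval z ((if i = 0 then Polynomial.X else 0 : Polynomial ℂ)))
      = ![z, 0] := by
    funext i; fin_cases i <;> simp
  rw [this, ← MvPolynomial.coe_aeval_eq_eval]
  rfl

lemma aux_op {A : Type*} [Ring A] [Algebra ℂ A] (T : A) (f : MvPolynomial (Fin 2) ℂ) :
    Polynomial.aeval T (MvPolynomial.aeval
      (fun i : Fin 2 => if i = 0 then Polynomial.X else (0 : Polynomial ℂ)) f)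
      = f.support.sum fun m => (MvPolynomial.coeff m f) • (T ^ (m 0) * (0:A) ^ (m 1)) := by
  rw [MvPolynomial.aeval_def, MvPolynomial.eval₂_eq', map_sum]
  refine Finset.sum_congr rfl fun m _ => ?_
  rw [Fin.prod_univ_two]
  simp only [if_pos rfl, if_neg (by decide : (1 : Fin 2) ≠ 0), map_mul, map_pow, map_zero,
    Polynomial.aeval_X, Polynomial.aeval_algebraMap_apply, Algebra.smul_def]
  simp [Algebra.smul_def]

lemma exists_eigen {H : Type*} [NormedAddCommGroup H] [InnerProductSpace ℂ H]
    [CompleteSpace H] [Nontrivial H] (T : H →L[ℂ] H) :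
    ∀ n : ℕ, ∀ p : Polynomial ℂ, p.natDegree ≤ n → p ≠ 0 → Polynomial.aeval T p = 0 →
      ∀ l ∈ spectrum ℂ T, ∃ x : H, x ≠ 0 ∧ T x = l • x := by
  intro n
  induction n with
  | zero =>
    intro p hd hp h0 l hl
    have hev : Polynomial.eval l p = 0 := by
      have := spectrum.subset_polynomial_aeval T p ⟨l, hl, rfl⟩
      rwa [h0, spectrum.zero_eq, Set.mem_singleton_iff] at this
    exfalso
    have : p = Polynomial.C (p.coeff 0) := Polynomial.eq_C_of_natDegree_eq_zero (Nat.le_zero.mp hd)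
    rw [this] at hev hp
    simp at hev
    exact hp (by rw [hev]; simp)
  | succ n ih =>
    intro p hd hp h0 l hl
    have hev : Polynomial.eval l p = 0 := by
      have := spectrum.subset_polynomial_aeval T p ⟨l, hl, rfl⟩
      rwa [h0, spectrum.zero_eq, Set.mem_singleton_iff] at this
    obtain ⟨q, hq⟩ := (Polynomial.dvd_iff_isRoot.mpr hev)
    have hq0 : q ≠ 0 := by rintro rfl; simp at hq; exact hp hq
    by_cases hqT : Polynomial.aeval T q = 0
    · refine ih q ?_ hq0 hqT l hl
      have : p.natDegree = q.natDegree + 1 := by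
        rw [hq, Polynomial.natDegree_mul (Polynomial.X_sub_C_ne_zero l) hq0,
          Polynomial.natDegree_X_sub_C]
        ring
      omega
    · obtain ⟨x, hx⟩ : ∃ x : H, Polynomial.aeval T q x ≠ 0 := by
        by_contra hc
        push_neg at hc
        exact hqT (ContinuousLinearMap.ext fun x => by simpa using hc x)
      refine ⟨Polynomial.aeval T q x, hx, ?_⟩
      have : Polynomial.aeval T p = (T - l • (1 : H →L[ℂ] H)) * Polynomial.aeval T q := by
        rw [hq, map_mul]
        congr 1
        simp [Polynomial.aeval_X, sub_eq_add_neg, Algebra.algebraMap_eq_smul_one]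
      rw [this] at h0
      have happ := congrArg (fun S : H →L[ℂ] H => S x) h0
      simp only [ContinuousLinearMap.zero_apply, ContinuousLinearMap.mul_apply,
        ContinuousLinearMap.sub_apply, ContinuousLinearMap.smul_apply,
        ContinuousLinearMap.one_apply] at happ
      exact sub_eq_zero.mp happ

lemma eigen_le_numRadius {H : Type*} [NormedAddCommGroup H] [InnerProductSpace ℂ H]
    (T : H →L[ℂ] H) (l : ℂ) (x : H) (hx : x ≠ 0) (hTx : T x = l • x) :
    ‖l‖ ≤ numRadiusOp T := by
  set u : H := ‖x‖⁻¹ • x with hu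
  have hxn : ‖x‖ ≠ 0 := norm_ne_zero_iff.mpr hx
  have hun : ‖u‖ = 1 := by
    rw [hu, norm_smul]
    simp [abs_of_nonneg (inv_nonneg.mpr (norm_nonneg x)), inv_mul_cancel₀ hxn]
  have hTu : T u = l • u := by
    rw [hu, T.map_smul_of_tower, hTx, smul_comm]
  have hinner : (inner ℂ u (T u) : ℂ) = l := by
    rw [hTu, inner_smul_right, @inner_self_eq_norm_sq_to_K ℂ, hun]
    simp
  have hmem : ‖l‖ ∈
      {s : ℝ | ∃ x : H, ‖x‖ = 1 ∧ s = ‖(inner ℂ x (T x) : ℂ)‖} :=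
    ⟨u, hun, by rw [hinner]⟩
  refine le_csSup ⟨‖T‖, ?_⟩ hmem
  rintro s ⟨y, hy, rfl⟩
  calc ‖(inner ℂ y (T y) : ℂ)‖ = ‖(inner ℂ y (T y) : ℂ)‖ := rfl
    _ ≤ ‖y‖ * ‖T y‖ := norm_inner_le_norm y (T y)
    _ ≤ ‖y‖ * (‖T‖ * ‖y‖) := by
        gcongr
        exact T.le_opNorm y
    _ = ‖T‖ := by rw [hy]; ring

theorem stmt12 {H : Type*} [NormedAddCommGroup H] [InnerProductSpace ℂ H]
    [CompleteSpace H] [Nontrivial H]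
    (T : H →L[ℂ] H) (f : MvPolynomial (Fin 2) ℂ)
    (hfd : GammaDistinguished f) (hann : opEval2 f T 0 = 0) :
    letI p : Polynomial ℂ :=
      MvPolynomial.aeval (fun i : Fin 2 => if i = 0 then Polynomial.X else 0) f
    ¬ (MvPolynomial.X 1 ∣ f) ∧
    0 < p.natDegree ∧
    Polynomial.aeval T p = 0 ∧
    (spectrum ℂ T).Finite ∧
    spectrum ℂ T ⊆ {z : ℂ | Polynomial.eval z p = 0} ∧
    (numRadiusOp T ≤ 1 → spectrum ℂ T ⊆ Metric.ball (0 : ℂ) 1) := by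
  set q : Polynomial ℂ :=
    MvPolynomial.aeval (fun i : Fin 2 => if i = 0 then Polynomial.X else 0) f with hqdef
  -- Claim A : q has no root on the unit circle
  have claimA : ∀ l : ℂ, ‖l‖ = 1 → Polynomial.eval l q ≠ 0 := by
    intro l hl hev
    rw [hqdef, aux_eval] at hev
    have hZ : ((l, 0) : ℂ × ℂ) ∈ Zset f := by simpa [Zset] using hev
    have hΓ : ((l, 0) : ℂ × ℂ) ∈ GammaSet :=
      ⟨l, 0, le_of_eq hl, by norm_num, by simp⟩
    have hG2 : ((l, 0) : ℂ × ℂ) ∉ G2 := by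
      rintro ⟨z1, z2, h1, h2, heq⟩
      obtain ⟨hsum, hprod⟩ := Prod.ext_iff.mp heq
      rcases mul_eq_zero.mp hprod.symm with rfl | rfl
      · simp only [zero_add] at hsum; rw [hsum] at hl; rw [hl] at h2; linarith
      · simp only [add_zero] at hsum; rw [hsum] at hl; rw [hl] at h1; linarith
    obtain ⟨z1, z2, h1, h2, heq⟩ := hfd.2 ⟨hZ, hΓ, hG2⟩
    have hprod : z1 * z2 = 0 := (Prod.ext_iff.mp heq).2.symm
    have : ‖z1 * z2‖ = 1 := by rw [norm_mul, h1, h2]; norm_num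
    rw [hprod] at this; simp at this
  have hq0 : q ≠ 0 := by
    intro h
    exact claimA 1 (by simp) (by rw [h]; simp)
  have hqT : Polynomial.aeval T q = 0 := by
    have h := aux_op T f
    rw [hqdef]
    rw [show (fun i : Fin 2 => if i = 0 then Polynomial.X else (0 : Polynomial ℂ))
      = fun i : Fin 2 => if i = 0 then Polynomial.X else 0 from rfl] at h
    rw [h]
    exact hann
  have part5 : spectrum ℂ T ⊆ {z : ℂ | Polynomial.eval z q = 0} := by
    intro z hz
    have := spectrum.subset_polynomial_aeval T q ⟨z, hz, rfl⟩
    rwa [hqT, spectrum.zero_eq, Set.mem_singleton_iff] at this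
  have part1 : ¬ (MvPolynomial.X 1 ∣ f) := by
    rintro ⟨g, hg⟩
    refine claimA 1 (by simp) ?_
    rw [hqdef, aux_eval, hg]
    simp
  have part2 : 0 < q.natDegree := by
    rcases Nat.eq_zero_or_pos q.natDegree with h | h
    swap
    · exact h
    exfalso
    have hc : q = Polynomial.C (q.coeff 0) := Polynomial.eq_C_of_natDegree_eq_zero h
    rw [hc] at hqT
    obtain ⟨x, hx⟩ := exists_ne (0 : H)
    have := congrArg (fun S : H →L[ℂ] H => S x) hqT
    simp only [Polynomial.aeval_C, ContinuousLinearMap.zero_apply,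
      Algebra.algebraMap_eq_smul_one, ContinuousLinearMap.smul_apply,
      ContinuousLinearMap.one_apply] at this
    rcases smul_eq_zero.mp this with h0 | h0
    · rw [h0, map_zero] at hc; exact hq0 hc
    · exact hx h0
  have part4 : (spectrum ℂ T).Finite :=
    (Polynomial.finite_setOf_isRoot hq0).subset part5
  refine ⟨part1, part2, hqT, part4, part5, ?_⟩
  intro hω z hz
  have hev : Polynomial.eval z q = 0 := part5 hz
  obtain ⟨x, hx, hTx⟩ := exists_eigen T q.natDegree q le_rfl hq0 hqT z hz
  have hle : ‖z‖ ≤ 1 := (eigen_le_numRadius T z x hx hTx).trans hω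
  have hne : ‖z‖ ≠ 1 := fun h => claimA z h hev
  rw [Metric.mem_ball, dist_zero_right]
  exact lt_of_le_of_ne hle hne
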